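/- Let F₀ : ℝ³ → ℝ³ be the vector field F₀(x,y,z) = (x − y − (3/2)xz² − x(x²+y²)/2, x + y − (3/2)yz² − y(x²+y²)/2, −z − z³/2 − (3/2)z(x²+y²)), let DF₀(ξ) denote its Jacobian matrix at ξ, and let P = diag(−1, −1, 1). Then for every ξ = (x,y,z) ∈ ℝ³ and every real λ satisfying 3(x² + y² + z²) − 2 < λ < 3(x² + y² + z²) + 2, the symmetric matrix P·DF₀(ξ) + DF₀(ξ)ᵀ·P + λ·P is negative definite. -/

import Mathlib

open Matrix

noncomputable section

/-- The limiting vector field `F₀` on ℝ³. -/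
def F₀ : (Fin 3 → ℝ) → (Fin 3 → ℝ) := fun v =>
  ![v 0 - v 1 - (3/2) * v 0 * (v 2)^2 - v 0 * ((v 0)^2 + (v 1)^2) / 2,
    v 0 + v 1 - (3/2) * v 1 * (v 2)^2 - v 1 * ((v 0)^2 + (v 1)^2) / 2,
    -(v 2) - (v 2)^3 / 2 - (3/2) * v 2 * ((v 0)^2 + (v 1)^2)]

/-- The Jacobian matrix of `F₀` at a point `ξ`. -/
def JacF₀ (ξ : Fin 3 → ℝ) : Matrix (Fin 3) (Fin 3) ℝ :=
  Matrix.of fun i j => fderiv ℝ F₀ ξ (Pi.single j 1) i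

/-- `P = diag(−1, −1, 1)`. -/
def P : Matrix (Fin 3) (Fin 3) ℝ := Matrix.diagonal ![-1, -1, 1]

abbrev pr (k : Fin 3) : (Fin 3 → ℝ) →L[ℝ] ℝ :=
  ContinuousLinearMap.proj (R := ℝ) (φ := fun _ : Fin 3 => ℝ) k

def D0 (ξ : Fin 3 → ℝ) : (Fin 3 → ℝ) →L[ℝ] ℝ :=
  (1 - (3/2)*(ξ 2)^2 - (3*(ξ 0)^2 + (ξ 1)^2)/2) • pr 0 + (-1 - ξ 0 * ξ 1) • pr 1
    + (-3 * ξ 0 * ξ 2) • pr 2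
def D1 (ξ : Fin 3 → ℝ) : (Fin 3 → ℝ) →L[ℝ] ℝ :=
  (1 - ξ 0 * ξ 1) • pr 0 + (1 - (3/2)*(ξ 2)^2 - ((ξ 0)^2 + 3*(ξ 1)^2)/2) • pr 1
    + (-3 * ξ 1 * ξ 2) • pr 2
def D2 (ξ : Fin 3 → ℝ) : (Fin 3 → ℝ) →L[ℝ] ℝ :=
  (-3 * ξ 0 * ξ 2) • pr 0 + (-3 * ξ 1 * ξ 2) • pr 1
    + (-1 - (3/2)*(ξ 2)^2 - (3/2)*((ξ 0)^2 + (ξ 1)^2)) • pr 2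
def L (ξ : Fin 3 → ℝ) : (Fin 3 → ℝ) →L[ℝ] (Fin 3 → ℝ) :=
  ContinuousLinearMap.pi ![D0 ξ, D1 ξ, D2 ξ]

lemma hasF (ξ : Fin 3 → ℝ) : HasFDerivAt F₀ (L ξ) ξ := by
  have h0 : HasFDerivAt (fun v : Fin 3 → ℝ => v 0) (pr 0) ξ := hasFDerivAt_apply (𝕜 := ℝ) 0 ξ
  have h1 : HasFDerivAt (fun v : Fin 3 → ℝ => v 1) (pr 1) ξ := hasFDerivAt_apply (𝕜 := ℝ) 1 ξ
  have h2 : HasFDerivAt (fun v : Fin 3 → ℝ => v 2) (pr 2) ξ := hasFDerivAt_apply (𝕜 := ℝ) 2 ξ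
  have hsq0 : HasFDerivAt (fun v : Fin 3 → ℝ => (v 0)^2) ((2 * ξ 0) • pr 0) ξ := by
    have h := (h0.mul h0).congr_fderiv (g' := (2 * ξ 0) • pr 0) (by ext w; simp; ring)
    simpa [pow_two, Pi.mul_def] using h
  have hsq1 : HasFDerivAt (fun v : Fin 3 → ℝ => (v 1)^2) ((2 * ξ 1) • pr 1) ξ := by
    have h := (h1.mul h1).congr_fderiv (g' := (2 * ξ 1) • pr 1) (by ext w; simp; ring)
    simpa [pow_two, Pi.mul_def] using h
  have hsq2 : HasFDerivAt (fun v : Fin 3 → ℝ => (v 2)^2) ((2 * ξ 2) • pr 2) ξ := by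
    have h := (h2.mul h2).congr_fderiv (g' := (2 * ξ 2) • pr 2) (by ext w; simp; ring)
    simpa [pow_two, Pi.mul_def] using h
  have hcu2 : HasFDerivAt (fun v : Fin 3 → ℝ => (v 2)^3) ((3 * (ξ 2)^2) • pr 2) ξ := by
    have h := (h2.mul (h2.mul h2)).congr_fderiv (g' := (3 * (ξ 2)^2) • pr 2)
      (by ext w; simp; ring)
    simpa [pow_succ, pow_two, mul_assoc, Pi.mul_def] using h
  apply hasFDerivAt_pi''
  intro i
  fin_cases i
  · show HasFDerivAt (fun v => F₀ v 0) _ ξ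
    simp only [F₀, Matrix.cons_val_zero]
    have hfun : (fun v : Fin 3 → ℝ => v 0 - v 1 - 3/2 * v 0 * (v 2)^2 - v 0 * ((v 0)^2 + (v 1)^2) / 2)
        = (fun v : Fin 3 → ℝ => v 0 - v 1 - 3/2 * v 0 * (v 2)^2 - v 0 * ((v 0)^2 + (v 1)^2) * (2:ℝ)⁻¹) := by
      funext v; ring
    rw [hfun]
    exact (((h0.sub h1).sub ((h0.const_mul (3/2:ℝ)).mul hsq2)).sub
      ((h0.mul (hsq0.add hsq1)).mul_const (2:ℝ)⁻¹)).congr_fderiv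
      (by ext w; simp [D0, L, Fin.isValue]; ring)
  · show HasFDerivAt (fun v => F₀ v 1) _ ξ
    simp only [F₀, Matrix.cons_val_one, Matrix.head_cons, Matrix.cons_val_zero]
    have hfun : (fun v : Fin 3 → ℝ => v 0 + v 1 - 3/2 * v 1 * (v 2)^2 - v 1 * ((v 0)^2 + (v 1)^2) / 2)
        = (fun v : Fin 3 → ℝ => v 0 + v 1 - 3/2 * v 1 * (v 2)^2 - v 1 * ((v 0)^2 + (v 1)^2) * (2:ℝ)⁻¹) := by
      funext v; ring
    rw [hfun]
    exact (((h0.add h1).sub ((h1.const_mul (3/2:ℝ)).mul hsq2)).sub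
      ((h1.mul (hsq0.add hsq1)).mul_const (2:ℝ)⁻¹)).congr_fderiv
      (by ext w; simp [D1, L, Fin.isValue]; ring)
  · show HasFDerivAt (fun v => F₀ v 2) _ ξ
    simp only [F₀, Matrix.cons_val_two, Matrix.tail_cons, Matrix.head_cons]
    have hfun : (fun v : Fin 3 → ℝ => -(v 2) - (v 2)^3 / 2 - 3/2 * v 2 * ((v 0)^2 + (v 1)^2))
        = (fun v : Fin 3 → ℝ => -(v 2) - (v 2)^3 * (2:ℝ)⁻¹ - 3/2 * v 2 * ((v 0)^2 + (v 1)^2)) := by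
      funext v; ring
    rw [hfun]
    exact ((h2.neg.sub (hcu2.mul_const (2:ℝ)⁻¹)).sub
      ((h2.const_mul (3/2:ℝ)).mul (hsq0.add hsq1))).congr_fderiv
      (by ext w; simp [D2, L, Fin.isValue]; ring)

lemma jac_eq (ξ : Fin 3 → ℝ) : JacF₀ ξ = Matrix.of fun i j => L ξ (Pi.single j 1) i := by
  ext i j
  rw [JacF₀, Matrix.of_apply, Matrix.of_apply, (hasF ξ).fderiv]


/-- For every `ξ ∈ ℝ³` and every real `λ` with
`3(x²+y²+z²) − 2 < λ < 3(x²+y²+z²) + 2`, the symmetric matrix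
`P·DF₀(ξ) + DF₀(ξ)ᵀ·P + λ·P` is negative definite. -/
theorem stmt10 (ξ : Fin 3 → ℝ) (lam : ℝ)
    (h1 : 3 * ((ξ 0)^2 + (ξ 1)^2 + (ξ 2)^2) - 2 < lam)
    (h2 : lam < 3 * ((ξ 0)^2 + (ξ 1)^2 + (ξ 2)^2) + 2) :
    ∀ v : Fin 3 → ℝ, v ≠ 0 →
      dotProduct ((P * JacF₀ ξ + (JacF₀ ξ)ᵀ * P + lam • P).mulVec v) v < 0 := by
  intro v hv
  have hvv : v 0 ≠ 0 ∨ v 1 ≠ 0 ∨ v 2 ≠ 0 := by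
    by_contra h
    push_neg at h
    exact hv (funext fun k => by fin_cases k <;> simp [h.1, h.2.1, h.2.2])
  rw [jac_eq]
  simp only [dotProduct, Matrix.mulVec, Matrix.add_apply, Matrix.mul_apply,
    Matrix.transpose_apply, Matrix.smul_apply, Fin.sum_univ_three, Matrix.of_apply,
    P, Matrix.diagonal_apply, L, D0, D1, D2, ContinuousLinearMap.pi_apply,
    ContinuousLinearMap.add_apply, ContinuousLinearMap.smul_apply,
    ContinuousLinearMap.proj_apply, Pi.single_apply, Matrix.cons_val_zero,
    Matrix.cons_val_one, Matrix.head_cons, Matrix.cons_val_two, Matrix.tail_cons,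
    smul_eq_mul, Fin.reduceEq, Matrix.diagonal, ite_true, ite_false]
  norm_num
  rcases hvv with h | h | h
  · have hp : 0 < (v 0)^2 := by positivity
    nlinarith [sq_nonneg (ξ 1 * v 0 - ξ 0 * v 1), sq_nonneg (v 1), sq_nonneg (v 2),
      mul_pos (by linarith : (0:ℝ) < lam - (3 * ((ξ 0)^2 + (ξ 1)^2 + (ξ 2)^2) - 2)) hp,
      mul_nonneg (by linarith : (0:ℝ) ≤ lam - (3 * ((ξ 0)^2 + (ξ 1)^2 + (ξ 2)^2) - 2)) (sq_nonneg (v 1)),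
      mul_nonneg (by linarith : (0:ℝ) ≤ 3 * ((ξ 0)^2 + (ξ 1)^2 + (ξ 2)^2) + 2 - lam) (sq_nonneg (v 2))]
  · have hp : 0 < (v 1)^2 := by positivity
    nlinarith [sq_nonneg (ξ 1 * v 0 - ξ 0 * v 1), sq_nonneg (v 0), sq_nonneg (v 2),
      mul_pos (by linarith : (0:ℝ) < lam - (3 * ((ξ 0)^2 + (ξ 1)^2 + (ξ 2)^2) - 2)) hp,
      mul_nonneg (by linarith : (0:ℝ) ≤ lam - (3 * ((ξ 0)^2 + (ξ 1)^2 + (ξ 2)^2) - 2)) (sq_nonneg (v 0)),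
      mul_nonneg (by linarith : (0:ℝ) ≤ 3 * ((ξ 0)^2 + (ξ 1)^2 + (ξ 2)^2) + 2 - lam) (sq_nonneg (v 2))]
  · have hp : 0 < (v 2)^2 := by positivity
    nlinarith [sq_nonneg (ξ 1 * v 0 - ξ 0 * v 1), sq_nonneg (v 0), sq_nonneg (v 1),
      mul_pos (by linarith : (0:ℝ) < 3 * ((ξ 0)^2 + (ξ 1)^2 + (ξ 2)^2) + 2 - lam) hp,
      mul_nonneg (by linarith : (0:ℝ) ≤ lam - (3 * ((ξ 0)^2 + (ξ 1)^2 + (ξ 2)^2) - 2)) (sq_nonneg (v 0)),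
      mul_nonneg (by linarith : (0:ℝ) ≤ lam - (3 * ((ξ 0)^2 + (ξ 1)^2 + (ξ 2)^2) - 2)) (sq_nonneg (v 1))]
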